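/- Assume a² < b². The function ũ(t) = cosh(ωt) − ((a+b)/ω) sinh(ωt), with ω = √(b²−a²), has a real zero if and only if ab > 0, in which case its unique zero is t₀ = (1/ω) arctanh(ω/(a+b)). -/

import Mathlib

/-- The inverse hyperbolic tangent. -/
noncomputable def arctanh (x : ℝ) : ℝ := (1 / 2) * Real.log ((1 + x) / (1 - x))

theorem zeros_C2 (a b : ℝ) (h : a^2 < b^2)
    (ω : ℝ) (hω : ω = Real.sqrt (b^2 - a^2))
    (u : ℝ → ℝ)
    (hu : ∀ t, u t = Real.cosh (ω * t) - ((a + b) / ω) * Real.sinh (ω * t)) :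
    ((∃ t : ℝ, u t = 0) ↔ a * b > 0) ∧
    (a * b > 0 → ∀ t : ℝ, u t = 0 ↔ t = (1 / ω) * arctanh (ω / (a + b))) := by
  have hb2 : 0 < b^2 - a^2 := by linarith
  have hω0 : 0 < ω := hω ▸ Real.sqrt_pos.mpr hb2
  have hωne : ω ≠ 0 := hω0.ne'
  have hω2 : ω^2 = b^2 - a^2 := by rw [hω, Real.sq_sqrt hb2.le]
  have habne : a + b ≠ 0 := by
    intro h0
    have hb : a = -b := by linarith
    rw [hb] at h
    nlinarith
  set A := ω - (a + b) with hA
  set B := ω + (a + b) with hB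
  have hABmul : A * B = -2 * (a * (a + b)) := by
    have h1 : A * B = ω^2 - (a+b)^2 := by ring
    rw [h1, hω2]; ring
  -- key reformulation
  have key : ∀ t, u t = 0 ↔ A * Real.exp (ω * t) + B * Real.exp (-(ω * t)) = 0 := by
    intro t
    have he : A * Real.exp (ω * t) + B * Real.exp (-(ω * t)) = 2 * ω * u t := by
      rw [hu t, Real.cosh_eq, Real.sinh_eq]
      field_simp
      ring
    rw [he]
    constructor
    · intro h1; rw [h1]; ring
    · intro h1
      rcases mul_eq_zero.mp h1 with h2 | h2
      · exact absurd h2 (by positivity)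
      · exact h2
  -- sign equivalence
  have equivsign : a * b > 0 ↔ a * (a + b) > 0 := by
    rcases lt_trichotomy a 0 with ha | ha | ha
    · constructor <;> intro hx <;> nlinarith
    · subst ha; constructor <;> intro hx <;> nlinarith
    · constructor <;> intro hx <;> nlinarith
  -- the zero when ab > 0
  have main : a * b > 0 → ∀ t : ℝ, u t = 0 ↔ t = (1 / ω) * arctanh (ω / (a + b)) := by
    intro hab t
    have haab : a * (a + b) > 0 := equivsign.mp hab
    have hABneg : A * B < 0 := by rw [hABmul]; linarith
    have hAne : A ≠ 0 := by
      intro h0; rw [h0] at hABneg; simp at hABneg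
    have hr : 0 < -B / A := by
      rcases lt_or_gt_of_ne hAne with hA0 | hA0
      · have hB0 : 0 < B := by nlinarith
        exact div_pos_of_neg_of_neg (by linarith) hA0
      · have hB0 : B < 0 := by nlinarith
        exact div_pos (by linarith) hA0
    have harct : (1 / ω) * arctanh (ω / (a + b)) = Real.log (-B / A) / (2 * ω) := by
      unfold arctanh
      have h5 : 1 - ω / (a + b) = -A / (a + b) := by
        rw [hA]; field_simp; ring
      have h6 : 1 + ω / (a + b) = B / (a + b) := by
        rw [hB]; field_simp; ring
      have : (1 + ω / (a + b)) / (1 - ω / (a + b)) = -B / A := by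
        rw [h5, h6, div_div_div_eq]
        rw [div_eq_div_iff (by exact mul_ne_zero habne (neg_ne_zero.mpr hAne)) hAne]
        ring
      rw [this]
      ring
    rw [key t, harct]
    constructor
    · intro h1
      have hex : Real.exp (ω * t) ≠ 0 := (Real.exp_pos _).ne'
      have h2 : A * Real.exp (ω * t) * Real.exp (ω * t) + B * Real.exp (-(ω * t)) * Real.exp (ω * t) = 0 := by
        rw [← add_mul, h1]; ring
      rw [mul_assoc, ← Real.exp_add, mul_assoc, ← Real.exp_add] at h2
      simp at h2
      have h3 : Real.exp (ω * t + ω * t) = -B / A := by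
        rw [eq_div_iff hAne]
        linear_combination h2
      have h4 : ω * t + ω * t = Real.log (-B / A) := by
        rw [← h3, Real.log_exp]
      rw [eq_div_iff (mul_ne_zero two_ne_zero hωne)]
      linear_combination h4
    · intro h1
      have h4 : ω * t + ω * t = Real.log (-B / A) := by
        rw [h1]; field_simp; ring
      have h3 : Real.exp (ω * t + ω * t) = -B / A := by
        rw [h4, Real.exp_log hr]
      have h2 : A * Real.exp (ω * t + ω * t) = -B := by
        rw [h3]; field_simp
      rw [Real.exp_add] at h2
      have hex : Real.exp (ω * t) ≠ 0 := (Real.exp_pos _).ne'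
      have : A * Real.exp (ω * t) = -B * Real.exp (-(ω * t)) := by
        have := Real.exp_neg (ω * t)
        rw [Real.exp_neg, eq_mul_inv_iff_mul_eq₀ hex]
        linear_combination h2
      linarith [this]
  refine ⟨⟨?_, ?_⟩, main⟩
  · rintro ⟨t, ht⟩
    by_contra hab
    push_neg at hab
    have haab : a * (a + b) ≤ 0 := by
      by_contra hc
      push_neg at hc
      exact absurd (equivsign.mpr hc) (not_lt.mpr hab)
    have hABpos : 0 ≤ A * B := by rw [hABmul]; linarith
    have hApos : 0 ≤ A ∧ 0 ≤ B := by
      rcases le_or_gt 0 A with h1 | h1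
      · refine ⟨h1, ?_⟩
        rcases le_or_gt 0 B with h2 | h2
        · exact h2
        · nlinarith
      · exfalso
        have hB' : B ≤ 0 := by nlinarith
        have : A + B = 2 * ω := by ring
        linarith
    have h1 := (key t).mp ht
    have e1 := Real.exp_pos (ω * t)
    have e2 := Real.exp_pos (-(ω * t))
    have hA0 : A = 0 := by nlinarith [mul_nonneg hApos.1 e1.le, mul_nonneg hApos.2 e2.le]
    have hB0 : B = 0 := by nlinarith [mul_nonneg hApos.1 e1.le, mul_nonneg hApos.2 e2.le]
    have : A + B = 2 * ω := by ring
    rw [hA0, hB0] at this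
    linarith
  · intro hab
    exact ⟨(1 / ω) * arctanh (ω / (a + b)), (main hab _).mpr rfl⟩
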